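/- arXiv:1809.03057 — 2 statements merged into one kernel-verified Lean document; each statement's English description precedes it below -/
import Mathlib

section
/- For every nonterminal history h ∈ H \ Z and every action a ∈ A(h), the expectation of the baseline-enhanced sampled history-action value equals the importance-weighted sum of child values over terminal histories passing through h·a, with all baseline terms cancelling: E_{z∼ξ}[û_i^b(σ,h,a|z)] = Σ_{z∈Z, h·a⊑z} q(z)·û_i^b(σ,h·a|z)/ξ(h,a). -/
open Finset

variable {A : Type*} [Fintype A] [DecidableEq A]

/-- The set of legal actions at history `h`: those `a` with `h ++ [a] ∈ H`. -/
def legal (H : Finset (List A)) (h : List A) : Finset A :=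
  Finset.univ.filter fun a => h ++ [a] ∈ H

/-- Product of `f (h', a)` over all prefix steps `h'·a ⊑ h` of the history `h`.
With `f = ξ` this is the sampling probability `q(h)`; note `pathProd f [] = 1`. -/
def pathProd (f : List A → A → ℝ) (h : List A) : ℝ :=
  ∏ k : Fin h.length, f (h.take (k : ℕ)) (h.get k)

/-- `π^σ(h, z)`: product of `σ (h', a)` over all prefix steps `h'·a` with `h ⊏ h'·a ⊑ z`. -/
def sfxProd (σ : List A → A → ℝ) (h z : List A) : ℝ :=
  ∏ k : Fin z.length, if h.length ≤ (k : ℕ) then σ (z.take (k : ℕ)) (z.get k) else 1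

/-- `π^σ_{-i}(h)`: product of `σ (h', a)` over all prefix steps `h'·a ⊑ h` with `τ h' ≠ i`. -/
def oppProd {N : Type*} [DecidableEq N] (σ : List A → A → ℝ) (τ : List A → N) (i : N)
    (h : List A) : ℝ :=
  ∏ k : Fin h.length, if τ (h.take (k : ℕ)) ≠ i then σ (h.take (k : ℕ)) (h.get k) else 1

/-- The expected value `u_i^σ(h) = Σ_{z ∈ Z, h ⊑ z} π^σ(h,z)·u_i(z)`. -/
def expUtil (σ : List A → A → ℝ) (u : List A → ℝ) (Z : Finset (List A)) (h : List A) : ℝ :=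
  ∑ z ∈ Z.filter (fun z => h <+: z), sfxProd σ h z * u z

/-- The plain sampled history value `û_i(σ, h | z)`:
`u_i(h)` if `h = z`, `Σ_{a ∈ A(h)} σ(h,a)·û_i(σ,h,a|z)` if `h ⊏ z`, and `0` otherwise,
where `û_i(σ,h,a|z) = û_i(σ,h·a|z)/ξ(h,a)` if `h·a ⊑ z` and `0` otherwise. -/
noncomputable def uhat (ξ σ : List A → A → ℝ) (u : List A → ℝ) (H : Finset (List A))
    (z : List A) (h : List A) : ℝ :=
  if h = z then u z
  else if h <+: z then
    ∑ a ∈ legal H h, σ h a *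
      (if hpa : h ++ [a] <+: z then uhat ξ σ u H z (h ++ [a]) / ξ h a else 0)
  else 0
termination_by z.length - h.length
decreasing_by
  have := hpa.length_le
  simp only [List.length_append, List.length_singleton] at this ⊢
  omega

/-- The plain sampled history-action value `û_i(σ, h, a | z)`. -/
noncomputable def uhatA (ξ σ : List A → A → ℝ) (u : List A → ℝ) (H : Finset (List A))
    (z : List A) (h : List A) (a : A) : ℝ :=
  if h ++ [a] <+: z then uhat ξ σ u H z (h ++ [a]) / ξ h a else 0

/-- The baseline-enhanced sampled history value `û_i^b(σ, h | z)`: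
`u_i(h)` if `h = z`, `Σ_{a ∈ A(h)} σ(h,a)·û_i^b(σ,h,a|z)` if `h ⊏ z`, and `0` otherwise,
where `û_i^b(σ,h,a|z) = b(h,a) + (û_i^b(σ,h·a|z) − b(h,a))/ξ(h,a)` if `h·a ⊑ z`,
`b(h,a)` if `h ⊏ z` and `h·a ⋢ z`, and `0` otherwise. -/
noncomputable def uhatB (ξ σ : List A → A → ℝ) (u : List A → ℝ) (H : Finset (List A))
    (b : List A → A → ℝ) (z : List A) (h : List A) : ℝ :=
  if h = z then u z
  else if h <+: z then
    ∑ a ∈ legal H h, σ h a *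
      (if hpa : h ++ [a] <+: z then b h a + (uhatB ξ σ u H b z (h ++ [a]) - b h a) / ξ h a
       else b h a)
  else 0
termination_by z.length - h.length
decreasing_by
  have := hpa.length_le
  simp only [List.length_append, List.length_singleton] at this ⊢
  omega

/-- The baseline-enhanced sampled history-action value `û_i^b(σ, h, a | z)`. -/
noncomputable def uhatBA (ξ σ : List A → A → ℝ) (u : List A → ℝ) (H : Finset (List A))
    (b : List A → A → ℝ) (z : List A) (h : List A) (a : A) : ℝ :=
  if h ++ [a] <+: z then b h a + (uhatB ξ σ u H b z (h ++ [a]) - b h a) / ξ h a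
  else if h <+: z ∧ h ≠ z then b h a
  else 0


section Aux
set_option linter.unusedSectionVars false

lemma pathProd_concat (f : List A → A → ℝ) (h : List A) (a : A) :
    pathProd f (h ++ [a]) = pathProd f h * f h a := by
  have hl : (h ++ [a]).length = h.length + 1 := by simp
  rw [pathProd, Fintype.prod_equiv (finCongr hl)
    _ (fun j : Fin (h.length + 1) => f ((h ++ [a]).take (j : ℕ))
        ((h ++ [a]).get (Fin.cast hl.symm j)))
    (fun k => by simp)]
  rw [Fin.prod_univ_castSucc]
  congr 1
  · apply Finset.prod_congr rfl
    intro k _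
    simp only [pathProd, Fin.coe_castSucc, List.get_eq_getElem, Fin.coe_cast]
    rw [List.take_append_of_le_length k.isLt.le, List.getElem_append_left k.isLt]
  · simp only [Fin.val_last, List.get_eq_getElem, Fin.coe_cast]
    rw [List.take_left]
    congr 1
    exact List.getElem_concat_length (l := h) (a := a) rfl _

lemma exists_snoc_prefix {h z : List A} (hp : h <+: z) (hne : h ≠ z) :
    ∃ a, h ++ [a] <+: z := by
  obtain ⟨t, rfl⟩ := hp
  cases t with
  | nil => simp at hne
  | cons a t => exact ⟨a, t, by simp⟩

lemma snoc_prefix_unique {h z : List A} {a a' : A} (h1 : h ++ [a] <+: z)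
    (h2 : h ++ [a'] <+: z) : a = a' := by
  have e1 := h1.getElem (i := h.length) (by simp)
  have e2 := h2.getElem (i := h.length) (by simp)
  rw [List.getElem_concat_length (l := h) (a := a) (i := h.length) rfl] at e1
  rw [List.getElem_concat_length (l := h) (a := a') (i := h.length) rfl] at e2
  exact e1.trans e2.symm

lemma sum_pathProd_of_prefix
    (H Z : Finset (List A))
    (hclosed : ∀ h ∈ H, ∀ h' : List A, h' <+: h → h' ∈ H)
    (hZH : Z ⊆ H)
    (hreach : ∀ h ∈ H, ∃ z ∈ Z, h <+: z)
    (hterm : ∀ z ∈ Z, ∀ h ∈ H, z <+: h → z = h)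
    (ξ : List A → A → ℝ)
    (hξsum : ∀ h ∈ H, h ∉ Z → ∑ a ∈ legal H h, ξ h a = 1) :
    ∀ (n : ℕ) (h : List A), h ∈ H → H.sup List.length ≤ h.length + n →
      ∑ z ∈ Z.filter (fun z => h <+: z), pathProd ξ z = pathProd ξ h := by
  intro n
  induction n with
  | zero =>
    intro h hh hb
    by_cases hhZ : h ∈ Z
    · have hone : Z.filter (fun z => h <+: z) = {h} := by
        ext z
        simp only [Finset.mem_filter, Finset.mem_singleton]
        constructor
        · rintro ⟨hz, hp⟩
          exact (hterm h hhZ z (hZH hz) hp).symm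
        · rintro rfl
          exact ⟨hhZ, List.prefix_rfl⟩
      rw [hone, Finset.sum_singleton]
    · exfalso
      obtain ⟨z, hz, hp⟩ := hreach h hh
      have hne : h ≠ z := fun e => hhZ (e ▸ hz)
      have hlen : z.length ≤ h.length := by
        have := Finset.le_sup (f := List.length) (hZH hz)
        omega
      exact hne (hp.eq_of_length (le_antisymm hp.length_le hlen))
  | succ m ih =>
    intro h hh hb
    by_cases hhZ : h ∈ Z
    · have hone : Z.filter (fun z => h <+: z) = {h} := by
        ext z
        simp only [Finset.mem_filter, Finset.mem_singleton]
        constructor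
        · rintro ⟨hz, hp⟩
          exact (hterm h hhZ z (hZH hz) hp).symm
        · rintro rfl
          exact ⟨hhZ, List.prefix_rfl⟩
      rw [hone, Finset.sum_singleton]
    · have hset : Z.filter (fun z => h <+: z)
          = (legal H h).biUnion (fun a => Z.filter (fun z => h ++ [a] <+: z)) := by
        ext z
        simp only [Finset.mem_filter, Finset.mem_biUnion, legal, Finset.mem_univ, true_and]
        constructor
        · rintro ⟨hz, hp⟩
          have hne : h ≠ z := fun e => hhZ (e ▸ hz)
          obtain ⟨a, hpa⟩ := exists_snoc_prefix hp hne
          exact ⟨a, hclosed z (hZH hz) _ hpa, hz, hpa⟩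
        · rintro ⟨a, _, hz, hpa⟩
          exact ⟨hz, (h.prefix_append [a]).trans hpa⟩
      rw [hset, Finset.sum_biUnion ?disj]
      case disj =>
        intro a _ a' _ hne
        simp only [Function.onFun]
        rw [Finset.disjoint_left]
        intro z hz1 hz2
        simp only [Finset.mem_filter] at hz1 hz2
        exact hne (snoc_prefix_unique hz1.2 hz2.2)
      have hstep : ∀ a ∈ legal H h,
          ∑ z ∈ Z.filter (fun z => h ++ [a] <+: z), pathProd ξ z
            = pathProd ξ h * ξ h a := by
        intro a ha
        have haH : h ++ [a] ∈ H := by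
          simpa [legal] using ha
        rw [ih (h ++ [a]) haH (by simp only [List.length_append, List.length_singleton]; omega), pathProd_concat]
      rw [Finset.sum_congr rfl hstep, ← Finset.mul_sum, hξsum h hh hhZ, mul_one]

end Aux

/-- **Baseline terms cancel in expectation** (Lemma 4 in the paper).
For every nonterminal `h` and legal action `a` at `h`,
`E_{z∼ξ}[û_i^b(σ,h,a|z)] = Σ_{z∈Z, h·a⊑z} q(z)·û_i^b(σ,h·a|z)/ξ(h,a)`. -/
theorem baseline_terms_cancel
    (H Z : Finset (List A))
    (hempty : ([] : List A) ∈ H)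
    (hclosed : ∀ h ∈ H, ∀ h' : List A, h' <+: h → h' ∈ H)
    (hZH : Z ⊆ H)
    (hreach : ∀ h ∈ H, ∃ z ∈ Z, h <+: z)
    (hterm : ∀ z ∈ Z, ∀ h ∈ H, z <+: h → z = h)
    (hlegal : ∀ h ∈ H, h ∉ Z → (legal H h).Nonempty)
    (ξ : List A → A → ℝ)
    (hξpos : ∀ h ∈ H, h ∉ Z → ∀ a ∈ legal H h, 0 < ξ h a)
    (hξsum : ∀ h ∈ H, h ∉ Z → ∑ a ∈ legal H h, ξ h a = 1)
    (σ : List A → A → ℝ)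
    (hσnn : ∀ h ∈ H, h ∉ Z → ∀ a ∈ legal H h, 0 ≤ σ h a)
    (hσsum : ∀ h ∈ H, h ∉ Z → ∑ a ∈ legal H h, σ h a = 1)
    (u : List A → ℝ) (b : List A → A → ℝ)
    (h : List A) (hh : h ∈ H) (hhnt : h ∉ Z) (a : A) (ha : a ∈ legal H h) :
    (∑ z ∈ Z, pathProd ξ z * uhatBA ξ σ u H b z h a)
      = ∑ z ∈ Z.filter (fun z => h ++ [a] <+: z),
          pathProd ξ z * uhatB ξ σ u H b z (h ++ [a]) / ξ h a := by
  have hξne : ξ h a ≠ 0 := (hξpos h hh hhnt a ha).ne'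
  have haH : h ++ [a] ∈ H := by simpa [legal] using ha
  set P := pathProd ξ h with hP
  have hA : ∑ z ∈ Z.filter (fun z => h ++ [a] <+: z), pathProd ξ z = P * ξ h a := by
    rw [sum_pathProd_of_prefix H Z hclosed hZH hreach hterm ξ hξsum (H.sup List.length)
      (h ++ [a]) haH (by omega), pathProd_concat]
  have hB : ∑ z ∈ Z.filter (fun z => h <+: z), pathProd ξ z = P :=
    sum_pathProd_of_prefix H Z hclosed hZH hreach hterm ξ hξsum (H.sup List.length)
      h hh (by omega)
  rw [← Finset.sum_filter_add_sum_filter_not Z (fun z => h <+: z)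
    (fun z => pathProd ξ z * uhatBA ξ σ u H b z h a)]
  have hzero : ∑ z ∈ Z.filter (fun z => ¬ h <+: z),
      pathProd ξ z * uhatBA ξ σ u H b z h a = 0 := by
    apply Finset.sum_eq_zero
    intro z hz
    simp only [Finset.mem_filter] at hz
    unfold uhatBA
    rw [if_neg (fun hc => hz.2 ((h.prefix_append [a]).trans hc)),
      if_neg (fun hc => hz.2 hc.1), mul_zero]
  rw [hzero, add_zero,
    ← Finset.sum_filter_add_sum_filter_not (Z.filter (fun z => h <+: z))
      (fun z => h ++ [a] <+: z) (fun z => pathProd ξ z * uhatBA ξ σ u H b z h a)]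
  have hfe : (Z.filter (fun z => h <+: z)).filter (fun z => h ++ [a] <+: z)
      = Z.filter (fun z => h ++ [a] <+: z) := by
    ext z
    simp only [Finset.mem_filter]
    constructor
    · rintro ⟨⟨hz, _⟩, hp⟩; exact ⟨hz, hp⟩
    · rintro ⟨hz, hp⟩; exact ⟨⟨hz, (h.prefix_append [a]).trans hp⟩, hp⟩
  rw [hfe]
  have e1 : ∀ z ∈ Z.filter (fun z => h ++ [a] <+: z),
      pathProd ξ z * uhatBA ξ σ u H b z h a
        = pathProd ξ z * uhatB ξ σ u H b z (h ++ [a]) / ξ h a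
          + (b h a - b h a / ξ h a) * pathProd ξ z := by
    intro z hz
    simp only [Finset.mem_filter] at hz
    unfold uhatBA
    rw [if_pos hz.2]
    field_simp
    ring
  have e2 : ∀ z ∈ (Z.filter (fun z => h <+: z)).filter (fun z => ¬ h ++ [a] <+: z),
      pathProd ξ z * uhatBA ξ σ u H b z h a = b h a * pathProd ξ z := by
    intro z hz
    simp only [Finset.mem_filter] at hz
    have hne : h ≠ z := fun e => hhnt (e ▸ hz.1.1)
    unfold uhatBA
    rw [if_neg hz.2, if_pos ⟨hz.1.2, hne⟩]
    ring
  rw [Finset.sum_congr rfl e1, Finset.sum_congr rfl e2, Finset.sum_add_distrib,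
    ← Finset.mul_sum, ← Finset.mul_sum]
  have hC : ∑ z ∈ (Z.filter (fun z => h <+: z)).filter (fun z => ¬ h ++ [a] <+: z),
      pathProd ξ z = P - P * ξ h a := by
    have h3 := Finset.sum_filter_add_sum_filter_not (Z.filter (fun z => h <+: z))
      (fun z => h ++ [a] <+: z) (pathProd ξ)
    rw [hfe, hA, hB] at h3
    linarith
  rw [hA, hC]
  field_simp
  ring
end

section
/- Under the oracle baseline b*(h,a) = u_i^σ(h·a), the counterfactual value estimates have zero variance at every visited history: for every nonterminal h ∈ H \ Z, every a ∈ A(h), and every z ∈ Z with h ⊏ z, v̂_i^{b*}(σ,h,a|z) = (π^σ_{-i}(h)/q(h))·u_i^σ(h·a). In particular the value of v̂_i^{b*}(σ,h,a|z) is the same for all z ∈ Z with h ⊏ z (so its conditional variance given reaching h is zero), and if τ(h) = i it equals v_i(σ,h,a)/q(h), the true counterfactual value of taking a at h importance-weighted by the probability of reaching h. -/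
open Finset

variable {A : Type*} [Fintype A] [DecidableEq A]

lemma sfxProd_self (σ : List A → A → ℝ) (z : List A) : sfxProd σ z z = 1 := by
  unfold sfxProd
  exact Finset.prod_eq_one fun k _ => if_neg (by omega)

lemma next_prefix {h z : List A} (hpre : h <+: z) (hne : h ≠ z) :
    ∃ hlt : h.length < z.length, h ++ [z[h.length]] <+: z := by
  have hle := hpre.length_le
  have hlt : h.length < z.length := by
    rcases lt_or_eq_of_le hle with h' | h'
    · exact h'
    · exact absurd (hpre.eq_of_length h') hne
  refine ⟨hlt, ?_⟩
  rw [List.prefix_iff_eq_take] at hpre ⊢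
  rw [List.length_append, List.length_singleton, List.take_succ, ← hpre]
  simp [List.getElem?_eq_getElem hlt]

lemma sfxProd_step (σ : List A → A → ℝ) {h z : List A} (a : A) (hpa : h ++ [a] <+: z) :
    sfxProd σ h z = σ h a * sfxProd σ (h ++ [a]) z := by
  have hle := hpa.length_le
  simp only [List.length_append, List.length_singleton] at hle
  have hlt : h.length < z.length := by omega
  have htake : z.take h.length = h := by
    have : h <+: z := (List.prefix_append h [a]).trans hpa
    exact (List.prefix_iff_eq_take.mp this).symm
  have hget : z[h.length]'hlt = a := by
    have := hpa.getElem (i := h.length) (by simp)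
    rw [List.getElem_concat_length rfl] at this
    exact this.symm
  unfold sfxProd
  rw [← Finset.mul_prod_erase Finset.univ _ (Finset.mem_univ (⟨h.length, hlt⟩ : Fin z.length)),
    ← Finset.mul_prod_erase Finset.univ
      (fun k : Fin z.length => if (h ++ [a]).length ≤ (k : ℕ) then σ (z.take (k : ℕ)) (z.get k) else 1)
      (Finset.mem_univ (⟨h.length, hlt⟩ : Fin z.length))]
  have h1 : (if h.length ≤ ((⟨h.length, hlt⟩ : Fin z.length) : ℕ) then
      σ (z.take h.length) (z.get ⟨h.length, hlt⟩) else 1) = σ h a := by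
    rw [if_pos le_rfl, htake, List.get_eq_getElem, hget]
  have h2 : (if (h ++ [a]).length ≤ ((⟨h.length, hlt⟩ : Fin z.length) : ℕ) then
      σ (z.take h.length) (z.get ⟨h.length, hlt⟩) else 1) = 1 := by
    rw [if_neg (by simp)]
  rw [h1, h2, one_mul]
  congr 1
  refine Finset.prod_congr rfl fun x hx => ?_
  have hxne : (x : ℕ) ≠ h.length := by
    intro hx'
    exact (Finset.mem_erase.mp hx).1 (Fin.ext hx')
  by_cases hc : h.length ≤ (x : ℕ)
  · rw [if_pos hc, if_pos (by simp; omega)]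
  · rw [if_neg hc, if_neg (by simp; omega)]

lemma oppProd_append {N : Type*} [DecidableEq N] (σ : List A → A → ℝ) (τ : List A → N) (i : N)
    (h : List A) (a : A) :
    oppProd σ τ i (h ++ [a]) = oppProd σ τ i h * (if τ h ≠ i then σ h a else 1) := by
  unfold oppProd
  have e : (h ++ [a]).length = h.length + 1 := by simp
  rw [Fintype.prod_equiv (finCongr e.symm)
    (fun k : Fin (h.length + 1) =>
      if τ ((h ++ [a]).take (k : ℕ)) ≠ i then
        σ ((h ++ [a]).take (k : ℕ)) ((h ++ [a]).get (Fin.cast e.symm k)) else 1)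
    (fun k : Fin ((h ++ [a]).length) =>
      if τ ((h ++ [a]).take (k : ℕ)) ≠ i then
        σ ((h ++ [a]).take (k : ℕ)) ((h ++ [a]).get k) else 1)
    (fun k => rfl) |>.symm]
  rw [Fin.prod_univ_castSucc]
  congr 1
  · refine Finset.prod_congr rfl fun k _ => ?_
    have hk : (k : ℕ) < h.length := k.isLt
    have ht : (h ++ [a]).take (k : ℕ) = h.take (k : ℕ) :=
      List.take_append_of_le_length hk.le
    have hg : (h ++ [a]).get (Fin.cast e.symm k.castSucc) = h.get k := by
      simp only [List.get_eq_getElem, Fin.coe_cast, Fin.coe_castSucc]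
      exact List.getElem_append_left hk
    simp only [Fin.coe_castSucc, ht, hg]
  · have ht : (h ++ [a]).take h.length = h := List.take_left
    have hg : (h ++ [a]).get (Fin.cast e.symm (Fin.last h.length)) = a := by
      simp only [List.get_eq_getElem, Fin.coe_cast, Fin.val_last]
      exact List.getElem_concat_length rfl _
    simp only [Fin.val_last, ht, hg]

lemma expUtil_rec (H Z : Finset (List A))
    (hclosed : ∀ h ∈ H, ∀ h' : List A, h' <+: h → h' ∈ H)
    (hZH : Z ⊆ H)
    (hterm : ∀ z ∈ Z, ∀ h ∈ H, z <+: h → z = h)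
    (σ : List A → A → ℝ) (u : List A → ℝ) (a₀ : A)
    (h : List A) (hh : h ∈ H) (hhZ : h ∉ Z) :
    expUtil σ u Z h = ∑ a ∈ legal H h, σ h a * expUtil σ u Z (h ++ [a]) := by
  classical
  set g : List A → A := fun z => if hz : h.length < z.length then z[h.length] else a₀ with hg
  have hne : ∀ z ∈ Z, h <+: z → h ≠ z := by
    intro z hz hpre heq
    exact hhZ (heq ▸ hz)
  have hgz : ∀ z ∈ Z, h <+: z → ∃ hlt : h.length < z.length,
      g z = z[h.length] ∧ h ++ [g z] <+: z := by
    intro z hz hpre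
    obtain ⟨hlt, hnp⟩ := next_prefix hpre (hne z hz hpre)
    exact ⟨hlt, by simp [hg, hlt], by simpa [hg, hlt] using hnp⟩
  have hmaps : ∀ z ∈ Z.filter (fun z => h <+: z), g z ∈ legal H h := by
    intro z hz
    rw [Finset.mem_filter] at hz
    obtain ⟨hlt, -, hnp⟩ := hgz z hz.1 hz.2
    simp only [legal, Finset.mem_filter, Finset.mem_univ, true_and]
    exact hclosed z (hZH hz.1) _ hnp
  rw [expUtil, ← Finset.sum_fiberwise_of_maps_to hmaps]
  refine Finset.sum_congr rfl fun a ha => ?_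
  have hfe : (Z.filter (fun z => h <+: z)).filter (fun z => g z = a)
      = Z.filter (fun z => h ++ [a] <+: z) := by
    ext z
    simp only [Finset.mem_filter, and_assoc]
    constructor
    · rintro ⟨hz, hpre, hga⟩
      obtain ⟨hlt, hge, hnp⟩ := hgz z hz hpre
      exact ⟨hz, hga ▸ hnp⟩
    · rintro ⟨hz, hnp⟩
      have hpre : h <+: z := (List.prefix_append h [a]).trans hnp
      obtain ⟨hlt, hge, -⟩ := hgz z hz hpre
      refine ⟨hz, hpre, ?_⟩
      rw [hge]
      have := hnp.getElem (i := h.length) (by simp)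
      rw [List.getElem_concat_length rfl] at this
      exact this.symm
    all_goals exact fun _ => trivial
  rw [hfe, expUtil, Finset.mul_sum]
  refine Finset.sum_congr rfl fun z hz => ?_
  rw [Finset.mem_filter] at hz
  rw [sfxProd_step σ a hz.2, mul_assoc]

theorem uhatB_oracle (H Z : Finset (List A))
    (hclosed : ∀ h ∈ H, ∀ h' : List A, h' <+: h → h' ∈ H)
    (hZH : Z ⊆ H)
    (hterm : ∀ z ∈ Z, ∀ h ∈ H, z <+: h → z = h)
    (ξ σ : List A → A → ℝ) (u : List A → ℝ)
    (z : List A) (hz : z ∈ Z) (h : List A) (hh : h ∈ H) (hpre : h <+: z) :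
    uhatB ξ σ u H (fun h' a' => expUtil σ u Z (h' ++ [a'])) z h = expUtil σ u Z h := by
  rw [uhatB]
  by_cases heq : h = z
  · subst heq
    rw [if_pos rfl]
    have hfilt : Z.filter (fun z' => h <+: z') = {h} := by
      ext z'
      simp only [Finset.mem_filter, Finset.mem_singleton]
      constructor
      · rintro ⟨hz', hp⟩
        exact (hterm h hz z' (hZH hz') hp).symm
      · rintro rfl
        exact ⟨hz, List.prefix_rfl⟩
    rw [expUtil, hfilt, Finset.sum_singleton, sfxProd_self, one_mul]
  · rw [if_neg heq, if_pos hpre]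
    have hhZ : h ∉ Z := fun hmem => heq (hterm h hmem z (hZH hz) hpre)
    obtain ⟨hlt, -⟩ := next_prefix hpre heq
    rw [expUtil_rec H Z hclosed hZH hterm σ u (z[h.length]'hlt) h hh hhZ]
    refine Finset.sum_congr rfl fun a ha => ?_
    congr 1
    by_cases hpa : h ++ [a] <+: z
    · rw [dif_pos hpa,
        uhatB_oracle H Z hclosed hZH hterm ξ σ u z hz (h ++ [a])
          (hclosed z (hZH hz) _ hpa) hpa]
      simp
    · rw [dif_neg hpa]
termination_by z.length - h.length
decreasing_by
  have := hpa.length_le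
  simp only [List.length_append, List.length_singleton] at this ⊢
  omega

/-- **The oracle baseline yields zero-variance counterfactual value estimates**
(Lemma 3 in the paper). Under `b*(h,a) = u_i^σ(h·a)`, for every nonterminal `h`,
legal `a ∈ A(h)`, and `z ∈ Z` with `h ⊏ z`:
`v̂_i^{b*}(σ,h,a|z) = (π^σ_{-i}(h)/q(h))·u_i^σ(h·a)`; in particular the estimate is the
same for all `z` with `h ⊏ z` (zero conditional variance given reaching `h`), and if
`τ(h) = i` it equals `v_i(σ,h,a)/q(h) = π^σ_{-i}(h·a)·u_i^σ(h·a)/q(h)`. -/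
theorem oracle_baseline_zero_variance
    (H Z : Finset (List A))
    (hempty : ([] : List A) ∈ H)
    (hclosed : ∀ h ∈ H, ∀ h' : List A, h' <+: h → h' ∈ H)
    (hZH : Z ⊆ H)
    (hreach : ∀ h ∈ H, ∃ z ∈ Z, h <+: z)
    (hterm : ∀ z ∈ Z, ∀ h ∈ H, z <+: h → z = h)
    (hlegal : ∀ h ∈ H, h ∉ Z → (legal H h).Nonempty)
    (ξ : List A → A → ℝ)
    (hξpos : ∀ h ∈ H, h ∉ Z → ∀ a ∈ legal H h, 0 < ξ h a)
    (hξsum : ∀ h ∈ H, h ∉ Z → ∑ a ∈ legal H h, ξ h a = 1)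
    (σ : List A → A → ℝ)
    (hσnn : ∀ h ∈ H, h ∉ Z → ∀ a ∈ legal H h, 0 ≤ σ h a)
    (hσsum : ∀ h ∈ H, h ∉ Z → ∑ a ∈ legal H h, σ h a = 1)
    {N : Type*} [DecidableEq N] (τ : List A → N) (i : N) (u : List A → ℝ) :
    ∀ h ∈ H, h ∉ Z → ∀ a ∈ legal H h, ∀ z ∈ Z, h <+: z → h ≠ z →
      (oppProd σ τ i h / pathProd ξ h *
          uhatBA ξ σ u H (fun h' a' => expUtil σ u Z (h' ++ [a'])) z h a
        = oppProd σ τ i h / pathProd ξ h * expUtil σ u Z (h ++ [a])) ∧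
      (∀ z' ∈ Z, h <+: z' → h ≠ z' →
        oppProd σ τ i h / pathProd ξ h *
            uhatBA ξ σ u H (fun h' a' => expUtil σ u Z (h' ++ [a'])) z h a
          = oppProd σ τ i h / pathProd ξ h *
              uhatBA ξ σ u H (fun h' a' => expUtil σ u Z (h' ++ [a'])) z' h a) ∧
      (τ h = i →
        oppProd σ τ i h / pathProd ξ h *
            uhatBA ξ σ u H (fun h' a' => expUtil σ u Z (h' ++ [a'])) z h a
          = oppProd σ τ i (h ++ [a]) * expUtil σ u Z (h ++ [a]) / pathProd ξ h) := by
  intro h hh hhZ a ha z hz hpre hne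
  have key : ∀ z' ∈ Z, h <+: z' → h ≠ z' →
      uhatBA ξ σ u H (fun h' a' => expUtil σ u Z (h' ++ [a'])) z' h a
        = expUtil σ u Z (h ++ [a]) := by
    intro z' hz' hpre' hne'
    rw [uhatBA]
    by_cases hpa : h ++ [a] <+: z'
    · rw [if_pos hpa,
        uhatB_oracle H Z hclosed hZH hterm ξ σ u z' hz' (h ++ [a])
          (hclosed z' (hZH hz') _ hpa) hpa]
      simp
    · rw [if_neg hpa, if_pos ⟨hpre', hne'⟩]
  refine ⟨by rw [key z hz hpre hne], fun z' hz' hp' hn' => by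
    rw [key z hz hpre hne, key z' hz' hp' hn'], fun hτ => ?_⟩
  rw [key z hz hpre hne, oppProd_append, hτ]
  simp only [ne_eq, not_true_eq_false, if_false, mul_one]
  ring
end
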